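/- arXiv:2304.06592 — 2 statements merged into one kernel-verified Lean document; each statement's English description precedes it below -/
import Mathlib

section
/- Evolution equation of the smoothing density (forward–backward product rule for the hybrid master equation): let π, β : ℕ^l × ℝ^m × [0,∞) → ℝ with β everywhere strictly positive. Assume each fast propensity κᶜ_j(u,·) is twice continuously differentiable, and for each u the maps (v,t) ↦ π(u,v,t) and (v,t) ↦ β(u,v,t) are twice continuously differentiable in v and differentiable in t. Suppose that pointwise ∂_t π(u,v,t) = (𝒜 π(·,·,t))(u,v) and ∂_t β(u,v,t) = −(𝒜† β(·,·,t))(u,v). Fix a constant Z̃ > 0 and define π̃(u,v,t) = Z̃^{-1} β(u,v,t) π(u,v,t). Then pointwise ∂_t π̃(u,v,t) = − Σ_{j=1}^{m} ∂_{v_j}[ (κᶜ_j(u,v) + κᶜ_j(u,v) ∂_{v_j} log β(u,v,t)) π̃(u,v,t) ] + ½ Σ_{j=1}^{m} ∂²_{v_j}( κᶜ_j(u,v) π̃(u,v,t) ) + Σ_{i=1}^{l} κᴰ_i(u−e_i,v) π̃(u−e_i,v,t) β(u,v,t)/β(u−e_i,v,t) − Σ_{i=1}^{l} κᴰ_i(u,v)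 π̃(u,v,t) β(u+e_i,v,t)/β(u,v,t), where any term containing u − e_i is zero when u_i = 0. -/
private lemma hasDerivAt_mul3 {f g h : ℝ → ℝ} {f' g' h' x : ℝ}
    (hf : HasDerivAt f f' x) (hg : HasDerivAt g g' x) (hh : HasDerivAt h h' x) :
    HasDerivAt (fun s => f s * g s * h s)
      (f' * g x * h x + f x * g' * h x + f x * g x * h') x := by
  have := (hf.mul hg).mul hh
  exact this.congr_deriv (by simp only [Pi.mul_apply]; ring)

private lemma contDiff_one_deriv {f : ℝ → ℝ} (hf : ContDiff ℝ 2 f) :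
    ContDiff ℝ 1 (deriv f) := by
  have hf' : ContDiff ℝ (1+1) f := by
    rw [show ((1:WithTop ℕ∞)+1) = 2 by norm_num]; exact hf
  exact (contDiff_succ_iff_deriv.mp hf').2.2

private lemma one_var (rc rb rp : ℝ → ℝ) (Zi x : ℝ)
    (hc : ContDiff ℝ 2 rc) (hb : ContDiff ℝ 2 rb) (hp : ContDiff ℝ 2 rp)
    (hbpos : ∀ s, 0 < rb s) :
    -(deriv (fun s => (rc s + rc s * deriv (fun s' => Real.log (rb s')) s)
        * (Zi * (rb s * rp s))) x)
      + (1/2) * deriv (deriv (fun s' => rc s' * (Zi * (rb s' * rp s')))) x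
    = Zi * (-(rc x * rp x * deriv rb x)
        - (1/2) * (rc x * rp x * deriv (deriv rb) x)
        - rb x * deriv (fun s => rc s * rp s) x
        + (1/2) * (rb x * deriv (deriv (fun s' => rc s' * rp s')) x)) := by
  have hcd : Differentiable ℝ rc := hc.differentiable two_ne_zero
  have hbd : Differentiable ℝ rb := hb.differentiable two_ne_zero
  have hpd : Differentiable ℝ rp := hp.differentiable two_ne_zero
  have hcd' : Differentiable ℝ (deriv rc) := (contDiff_one_deriv hc).differentiable one_ne_zero
  have hbd' : Differentiable ℝ (deriv rb) := (contDiff_one_deriv hb).differentiable one_ne_zero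
  have hpd' : Differentiable ℝ (deriv rp) := (contDiff_one_deriv hp).differentiable one_ne_zero
  -- first-derivative function identities
  have E1 : deriv (fun s' => rc s' * rp s') = fun s => deriv rc s * rp s + rc s * deriv rp s := by
    funext s; exact ((hcd s).hasDerivAt.mul (hpd s).hasDerivAt).deriv
  have E2 : deriv (fun s' => rc s' * (Zi * (rb s' * rp s'))) =
      fun s => Zi * (deriv rc s * rb s * rp s + rc s * deriv rb s * rp s
        + rc s * rb s * deriv rp s) := by
    funext s
    have hfe : (fun s' => rc s' * (Zi * (rb s' * rp s'))) =
        fun y => Zi * (rc y * rb y * rp y) := by funext y; ring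
    rw [hfe]
    exact ((hasDerivAt_mul3 (hcd s).hasDerivAt (hbd s).hasDerivAt
      (hpd s).hasDerivAt).const_mul Zi).deriv
  have Elog : ∀ s, deriv (fun s' => Real.log (rb s')) s = deriv rb s / rb s := by
    intro s; exact ((hbd s).hasDerivAt.log (hbpos s).ne').deriv
  -- term 1
  have T1 : deriv (fun s => (rc s + rc s * deriv (fun s' => Real.log (rb s')) s)
      * (Zi * (rb s * rp s))) x
      = Zi * ((deriv rc x * rb x * rp x + rc x * deriv rb x * rp x
            + rc x * rb x * deriv rp x)
          + (deriv rc x * deriv rb x * rp x + rc x * deriv (deriv rb) x * rp x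
            + rc x * deriv rb x * deriv rp x)) := by
    have hfe : (fun s => (rc s + rc s * deriv (fun s' => Real.log (rb s')) s)
        * (Zi * (rb s * rp s))) =
        fun s => Zi * (rc s * rb s * rp s + rc s * deriv rb s * rp s) := by
      funext s
      have hb0 : rb s ≠ 0 := (hbpos s).ne'
      rw [Elog s]
      field_simp
    rw [hfe]
    exact (((hasDerivAt_mul3 (hcd x).hasDerivAt (hbd x).hasDerivAt (hpd x).hasDerivAt).add
      (hasDerivAt_mul3 (hcd x).hasDerivAt (hbd' x).hasDerivAt (hpd x).hasDerivAt)).const_mul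
        Zi).deriv
  -- term 2
  have T2 : deriv (deriv (fun s' => rc s' * (Zi * (rb s' * rp s')))) x
      = Zi * ((deriv (deriv rc) x * rb x * rp x + deriv rc x * deriv rb x * rp x
            + deriv rc x * rb x * deriv rp x)
          + (deriv rc x * deriv rb x * rp x + rc x * deriv (deriv rb) x * rp x
            + rc x * deriv rb x * deriv rp x)
          + (deriv rc x * rb x * deriv rp x + rc x * deriv rb x * deriv rp x
            + rc x * rb x * deriv (deriv rp) x)) := by
    rw [E2]
    exact ((((hasDerivAt_mul3 (hcd' x).hasDerivAt (hbd x).hasDerivAt (hpd x).hasDerivAt).add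
      (hasDerivAt_mul3 (hcd x).hasDerivAt (hbd' x).hasDerivAt (hpd x).hasDerivAt)).add
      (hasDerivAt_mul3 (hcd x).hasDerivAt (hbd x).hasDerivAt (hpd' x).hasDerivAt)).const_mul
        Zi).deriv
  -- RHS pieces
  have R1 : deriv (fun s => rc s * rp s) x = deriv rc x * rp x + rc x * deriv rp x := by
    rw [E1]
  have R2 : deriv (deriv (fun s' => rc s' * rp s')) x
      = (deriv (deriv rc) x * rp x + deriv rc x * deriv rp x)
        + (deriv rc x * deriv rp x + rc x * deriv (deriv rp) x) := by
    rw [E1]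
    exact (((hcd' x).hasDerivAt.mul (hpd x).hasDerivAt).add
      ((hcd x).hasDerivAt.mul (hpd' x).hasDerivAt)).deriv
  rw [T1, T2, R1, R2]
  ring


private lemma contDiff_comp_update {m : ℕ} (j : Fin m) (v : Fin m → ℝ)
    {f : (Fin m → ℝ) → ℝ} {n : WithTop ℕ∞} (hf : ContDiff ℝ n f) :
    ContDiff ℝ n (fun s : ℝ => f (Function.update v j s)) := by
  have hupd : ContDiff ℝ n (fun s : ℝ => Function.update v j s) := by
    have he : (fun s : ℝ => Function.update v j s)
        = fun s => v + (s - v j) • (Pi.single j 1 : Fin m → ℝ) := by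
      funext s k
      by_cases h : k = j
      · subst h; simp [Pi.single_apply]
      · simp [Function.update_apply, h, Pi.single_apply]
    rw [he]
    exact contDiff_const.add ((contDiff_id.sub contDiff_const).smul contDiff_const)
  exact hf.comp hupd

/-- Partial derivative in the `j`-th continuous coordinate. -/
noncomputable def pderiv' {m : ℕ} (j : Fin m) (f : (Fin m → ℝ) → ℝ) : (Fin m → ℝ) → ℝ :=
  fun v => deriv (fun t => f (Function.update v j t)) (v j)

/-- The hybrid master equation operator 𝒜.  Any term containing `u - e_i` is
taken to be zero when `u i = 0`. -/
noncomputable def hmeOp {l m : ℕ}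
    (κD : Fin l → (Fin l → ℕ) → (Fin m → ℝ) → ℝ)
    (κC : Fin m → (Fin l → ℕ) → (Fin m → ℝ) → ℝ)
    (f : (Fin l → ℕ) → (Fin m → ℝ) → ℝ) :
    (Fin l → ℕ) → (Fin m → ℝ) → ℝ :=
  fun u v =>
    (∑ i : Fin l,
      ((if u i = 0 then 0
        else κD i (u - Pi.single i 1) v * f (u - Pi.single i 1) v) - κD i u v * f u v))
    - (∑ j : Fin m, pderiv' j (fun w => κC j u w * f u w) v)
    + (1 / 2) * ∑ j : Fin m, pderiv' j (pderiv' j (fun w => κC j u w * f u w)) v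

/-- The adjoint operator 𝒜† of the hybrid master equation operator. -/
noncomputable def hmeOpAdj {l m : ℕ}
    (κD : Fin l → (Fin l → ℕ) → (Fin m → ℝ) → ℝ)
    (κC : Fin m → (Fin l → ℕ) → (Fin m → ℝ) → ℝ)
    (g : (Fin l → ℕ) → (Fin m → ℝ) → ℝ) :
    (Fin l → ℕ) → (Fin m → ℝ) → ℝ :=
  fun u v =>
    (∑ i : Fin l, κD i u v * (g (u + Pi.single i 1) v - g u v))
    + (∑ j : Fin m, κC j u v * pderiv' j (fun w => g u w) v)
    + (1 / 2) * ∑ j : Fin m, κC j u v * pderiv' j (pderiv' j (fun w => g u w)) v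

/-- Evolution equation of the smoothing density `π̃ = Z̃⁻¹ β π`, where `π` solves the
forward hybrid master equation and `β` solves the backward hybrid master equation. -/
theorem smoothing_evolution {l m : ℕ} (hl : 1 ≤ l) (hm : 1 ≤ m)
    (κD : Fin l → (Fin l → ℕ) → (Fin m → ℝ) → ℝ)
    (κC : Fin m → (Fin l → ℕ) → (Fin m → ℝ) → ℝ)
    (π β πs : (Fin l → ℕ) → (Fin m → ℝ) → ℝ → ℝ)
    (Z : ℝ) (hZ : 0 < Z)
    (hβpos : ∀ u v t, 0 < β u v t)
    (hκC : ∀ j u, ContDiff ℝ 2 (fun v => κC j u v))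
    (hπv : ∀ u t, 0 ≤ t → ContDiff ℝ 2 (fun v => π u v t))
    (hβv : ∀ u t, 0 ≤ t → ContDiff ℝ 2 (fun v => β u v t))
    (hπd : ∀ u v t, 0 ≤ t → DifferentiableAt ℝ (fun s => π u v s) t)
    (hβd : ∀ u v t, 0 ≤ t → DifferentiableAt ℝ (fun s => β u v s) t)
    (hforward : ∀ u v t, 0 ≤ t →
      deriv (fun s => π u v s) t = hmeOp κD κC (fun u' v' => π u' v' t) u v)
    (hbackward : ∀ u v t, 0 ≤ t →
      deriv (fun s => β u v s) t = -hmeOpAdj κD κC (fun u' v' => β u' v' t) u v)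
    (hπs : ∀ u v t, πs u v t = Z⁻¹ * (β u v t * π u v t)) :
    ∀ u v t, 0 ≤ t →
      deriv (fun s => πs u v s) t =
        -(∑ j : Fin m, pderiv' j (fun w =>
            (κC j u w + κC j u w * pderiv' j (fun w' => Real.log (β u w' t)) w)
              * πs u w t) v)
        + (1 / 2) * (∑ j : Fin m, pderiv' j (pderiv' j (fun w => κC j u w * πs u w t)) v)
        + (∑ i : Fin l,
            if u i = 0 then 0
            else κD i (u - Pi.single i 1) v * πs (u - Pi.single i 1) v t
              * (β u v t / β (u - Pi.single i 1) v t))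
        - (∑ i : Fin l,
            κD i u v * πs u v t * (β (u + Pi.single i 1) v t / β u v t)) := by
  intro u v t ht
  have h0 : deriv (fun s => Z⁻¹ * (β u v s * π u v s)) t =
      Z⁻¹ * ((-hmeOpAdj κD κC (fun u' v' => β u' v' t) u v) * π u v t
        + β u v t * hmeOp κD κC (fun u' v' => π u' v' t) u v) := by
    have hb := (hβd u v t ht).hasDerivAt
    have hp := (hπd u v t ht).hasDerivAt
    have hd := ((hb.mul hp).const_mul Z⁻¹).deriv
    rw [hforward u v t ht, hbackward u v t ht] at hd
    exact hd
  simp only [hπs]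
  rw [h0]
  simp only [hmeOp, hmeOpAdj]
  have hperj : ∀ j : Fin m,
      -(pderiv' j (fun w => (κC j u w + κC j u w * pderiv' j (fun w' => Real.log (β u w' t)) w)
          * (Z⁻¹ * (β u w t * π u w t))) v)
        + (1/2) * pderiv' j (pderiv' j (fun w => κC j u w * (Z⁻¹ * (β u w t * π u w t)))) v
      = Z⁻¹ * (-(κC j u v * π u v t * pderiv' j (fun w => β u w t) v)
          - (1/2) * (κC j u v * π u v t * pderiv' j (pderiv' j (fun w => β u w t)) v)
          - β u v t * pderiv' j (fun w => κC j u w * π u w t) v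
          + (1/2) * (β u v t * pderiv' j (pderiv' j (fun w => κC j u w * π u w t)) v)) := by
    intro j
    have key := one_var (fun s => κC j u (Function.update v j s))
      (fun s => β u (Function.update v j s) t) (fun s => π u (Function.update v j s) t)
      Z⁻¹ (v j)
      (contDiff_comp_update j v (hκC j u))
      (contDiff_comp_update j v (hβv u t ht))
      (contDiff_comp_update j v (hπv u t ht))
      (fun s => hβpos u _ t)
    simp only [Function.update_eq_self] at key
    simp only [pderiv', Function.update_idem, Function.update_self]
    exact key
  have hC : -(∑ j : Fin m, pderiv' j (fun w =>
        (κC j u w + κC j u w * pderiv' j (fun w' => Real.log (β u w' t)) w)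
          * (Z⁻¹ * (β u w t * π u w t))) v)
      + (1/2) * (∑ j : Fin m, pderiv' j (pderiv' j (fun w =>
          κC j u w * (Z⁻¹ * (β u w t * π u w t)))) v)
      = Z⁻¹ * ∑ j : Fin m,
          (-(κC j u v * π u v t * pderiv' j (fun w => β u w t) v)
            - (1/2) * (κC j u v * π u v t * pderiv' j (pderiv' j (fun w => β u w t)) v)
            - β u v t * pderiv' j (fun w => κC j u w * π u w t) v
            + (1/2) * (β u v t * pderiv' j (pderiv' j (fun w => κC j u w * π u w t)) v)) := by
    rw [Finset.mul_sum, Finset.mul_sum, ← Finset.sum_neg_distrib, ← Finset.sum_add_distrib]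
    exact Finset.sum_congr rfl fun j _ => hperj j
  have hSum1 : (∑ j : Fin m,
        (-(κC j u v * π u v t * pderiv' j (fun w => β u w t) v)
          - (1/2) * (κC j u v * π u v t * pderiv' j (pderiv' j (fun w => β u w t)) v)
          - β u v t * pderiv' j (fun w => κC j u w * π u w t) v
          + (1/2) * (β u v t * pderiv' j (pderiv' j (fun w => κC j u w * π u w t)) v)))
      = -(π u v t * ∑ j : Fin m, κC j u v * pderiv' j (fun w => β u w t) v)
        - (1/2) * (π u v t * ∑ j : Fin m, κC j u v * pderiv' j (pderiv' j (fun w => β u w t)) v)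
        - β u v t * ∑ j : Fin m, pderiv' j (fun w => κC j u w * π u w t) v
        + (1/2) * (β u v t * ∑ j : Fin m, pderiv' j (pderiv' j (fun w => κC j u w * π u w t)) v) := by
    simp only [Finset.mul_sum, ← Finset.sum_neg_distrib, ← Finset.sum_sub_distrib,
      ← Finset.sum_add_distrib]
    exact Finset.sum_congr rfl fun j _ => by ring
  have hperi : ∀ i : Fin l,
      (if u i = 0 then 0 else κD i (u - Pi.single i 1) v
          * (Z⁻¹ * (β (u - Pi.single i 1) v t * π (u - Pi.single i 1) v t))
          * (β u v t / β (u - Pi.single i 1) v t))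
        - κD i u v * (Z⁻¹ * (β u v t * π u v t)) * (β (u + Pi.single i 1) v t / β u v t)
      = Z⁻¹ * (β u v t * (if u i = 0 then 0
            else κD i (u - Pi.single i 1) v * π (u - Pi.single i 1) v t)
          - π u v t * (κD i u v * β (u + Pi.single i 1) v t)) := by
    intro i
    have h1 : β u v t ≠ 0 := (hβpos u v t).ne'
    have h2 : β (u - Pi.single i 1) v t ≠ 0 := (hβpos _ v t).ne'
    have h3 : Z ≠ 0 := hZ.ne'
    by_cases h : u i = 0
    · simp only [if_pos h]
      field_simp
      ring
    · simp only [if_neg h]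
      field_simp
  have hD : (∑ i : Fin l, if u i = 0 then 0 else κD i (u - Pi.single i 1) v
          * (Z⁻¹ * (β (u - Pi.single i 1) v t * π (u - Pi.single i 1) v t))
          * (β u v t / β (u - Pi.single i 1) v t))
        - ∑ i : Fin l, κD i u v * (Z⁻¹ * (β u v t * π u v t))
            * (β (u + Pi.single i 1) v t / β u v t)
      = Z⁻¹ * ∑ i : Fin l, (β u v t * (if u i = 0 then 0
            else κD i (u - Pi.single i 1) v * π (u - Pi.single i 1) v t)
          - π u v t * (κD i u v * β (u + Pi.single i 1) v t)) := by
    rw [Finset.mul_sum, ← Finset.sum_sub_distrib]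
    exact Finset.sum_congr rfl fun i _ => hperi i
  have hSum2 : (∑ i : Fin l, (β u v t * (if u i = 0 then 0
            else κD i (u - Pi.single i 1) v * π (u - Pi.single i 1) v t)
          - π u v t * (κD i u v * β (u + Pi.single i 1) v t)))
      = -(π u v t * ∑ i : Fin l, κD i u v * (β (u + Pi.single i 1) v t - β u v t))
        + β u v t * ∑ i : Fin l, ((if u i = 0 then 0
            else κD i (u - Pi.single i 1) v * π (u - Pi.single i 1) v t)
          - κD i u v * π u v t) := by
    simp only [Finset.mul_sum, ← Finset.sum_neg_distrib, ← Finset.sum_sub_distrib,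
      ← Finset.sum_add_distrib]
    exact Finset.sum_congr rfl fun i _ => by ring
  linear_combination -hC - hD - Z⁻¹ * hSum1 - Z⁻¹ * hSum2
end

section
/- Continuous part of the smoothing evolution identity (single fast reaction): let κ, π, β : ℝ → ℝ be twice continuously differentiable with β everywhere strictly positive, and set π̃ = β π. Then for every v ∈ ℝ: β(v) [ −(κπ)′(v) + ½ (κπ)″(v) ] − π(v) [ κ(v) β′(v) + ½ κ(v) β″(v) ] = −[ (κ + κ·(log β)′) π̃ ]′(v) + ½ (κ π̃)″(v). -/
/-- Continuous part of the smoothing evolution identity (single fast reaction):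
for `κ, π, β` twice continuously differentiable with `β > 0` and `π̃ = β π`,
`β [−(κπ)' + ½(κπ)''] − π [κ β' + ½ κ β'']
  = −[(κ + κ·(log β)') π̃]' + ½ (κ π̃)''`. -/
theorem smoothing_continuous_identity (κ π β πs : ℝ → ℝ)
    (hκ : ContDiff ℝ 2 κ) (hπ : ContDiff ℝ 2 π) (hβ : ContDiff ℝ 2 β)
    (hβpos : ∀ v, 0 < β v) (hπs : ∀ v, πs v = β v * π v) :
    ∀ v : ℝ,
      β v * (-(deriv (fun w => κ w * π w) v)
          + (1 / 2) * deriv (deriv (fun w => κ w * π w)) v)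
        - π v * (κ v * deriv β v + (1 / 2) * κ v * deriv (deriv β) v)
      = -(deriv (fun w => (κ w + κ w * deriv (fun x => Real.log (β x)) w) * πs w) v)
        + (1 / 2) * deriv (deriv (fun w => κ w * πs w)) v := by
  intro v
  set p : ℝ → ℝ := fun w => κ w * π w with hp_def
  have hp : ContDiff ℝ 2 p := hκ.mul hπ
  have hpd : Differentiable ℝ p := hp.differentiable (by norm_num)
  have hpd' : Differentiable ℝ (deriv p) := by
    have h2 : ContDiff ℝ (1 + 1 : WithTop ℕ∞) p := by norm_num; exact hp
    exact ((contDiff_succ_iff_deriv.mp h2).2.2).differentiable (by norm_num)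
  have hβd : Differentiable ℝ β := hβ.differentiable (by norm_num)
  have hβd' : Differentiable ℝ (deriv β) := by
    have h2 : ContDiff ℝ (1 + 1 : WithTop ℕ∞) β := by norm_num; exact hβ
    exact ((contDiff_succ_iff_deriv.mp h2).2.2).differentiable (by norm_num)
  -- first derivative of p * β
  have h1 : ∀ x, deriv (fun w => p w * β w) x
      = deriv p x * β x + p x * deriv β x := by
    intro x
    exact deriv_mul (hpd x) (hβd x)
  have h1f : deriv (fun w => p w * β w)
      = fun x => deriv p x * β x + p x * deriv β x := funext h1
  -- second derivative of p * β
  have h2 : deriv (deriv (fun w => p w * β w)) v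
      = (deriv (deriv p) v * β v + deriv p v * deriv β v)
        + (deriv p v * deriv β v + p v * deriv (deriv β) v) := by
    rw [h1f]
    rw [deriv_fun_add (f := fun w => deriv p w * β w) (g := fun w => p w * deriv β w) ((hpd' v).mul (hβd v)) ((hpd v).mul (hβd' v)),
        deriv_fun_mul (hpd' v) (hβd v), deriv_fun_mul (hpd v) (hβd' v)]
  -- identify the RHS drift function
  have h3 : (fun w => (κ w + κ w * deriv (fun x => Real.log (β x)) w) * πs w)
      = fun w => p w * β w + p w * deriv β w := by
    funext w
    have hlog : deriv (fun x => Real.log (β x)) w = deriv β w / β w :=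
      (((hβd w).hasDerivAt).log (hβpos w).ne').deriv
    rw [hπs, hlog, hp_def]
    have hβne : β w ≠ 0 := (hβpos w).ne'
    field_simp
  -- derivative of the drift function
  have h4 : deriv (fun w => p w * β w + p w * deriv β w) v
      = (deriv p v * β v + p v * deriv β v)
        + (deriv p v * deriv β v + p v * deriv (deriv β) v) := by
    rw [deriv_fun_add (f := fun w => p w * β w) (g := fun w => p w * deriv β w) ((hpd v).mul (hβd v)) ((hpd v).mul (hβd' v)),
        deriv_fun_mul (hpd v) (hβd v), deriv_fun_mul (hpd v) (hβd' v)]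
  -- identify κ * πs with p * β
  have h5 : (fun w => κ w * πs w) = fun w => p w * β w := by
    funext w
    rw [hπs, hp_def]
    ring
  rw [h3, h4, h5, h2]
  have hpv : p v = κ v * π v := rfl
  rw [hpv]
  ring
end
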